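/- arXiv:2409.14685 — 2 statements merged into one kernel-verified Lean document; each statement's English description precedes it below -/
import Mathlib

section
/- Let C ≥ 2 be an integer and Q : ℝ → ℂ the 2π-periodic step function with Q(φ) = exp(i(2ℓ+1)π/C) for 2ℓπ/C ≤ φ < 2(ℓ+1)π/C, ℓ = 0,…,C−1. For every nonzero integer k that is NOT of the form 1 − pC with p ∈ ℤ, the Fourier coefficient a_k = (1/2π)∫₀^{2π} Q(φ)e^{-ikφ} dφ equals 0. -/
open Real in
/-- For nonzero `k` not of the form `1 - p C`, the `k`-th Fourier coefficient of
the nearest-neighbor quantization function vanishes. -/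
theorem stmt_2 (C : ℕ) (hC : 2 ≤ C) (Q : ℝ → ℂ)
    (hQ : ∀ ℓ : ℤ, ∀ φ : ℝ, (2 * ℓ * π) / C ≤ φ → φ < (2 * (ℓ + 1) * π) / C →
      Q φ = Complex.exp (Complex.I * ((2 * ℓ + 1) * π / C)))
    (k : ℤ) (hk0 : k ≠ 0) (hk : ¬ ∃ p : ℤ, k = 1 - p * C) :
    ((1 / (2 * π) : ℝ) : ℂ) *
        ∫ φ in (0 : ℝ)..(2 * π), Q φ * Complex.exp (-Complex.I * k * φ) = 0 := by
  have hCpos : (0:ℝ) < C := by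
    have : (0:ℕ) < C := by omega
    exact_mod_cast this
  have hCne : (C:ℝ) ≠ 0 := ne_of_gt hCpos
  have hCneC : (C:ℂ) ≠ 0 := by exact_mod_cast (Complex.ofReal_ne_zero.mpr hCne)
  have hπ : (π:ℝ) ≠ 0 := Real.pi_ne_zero
  have hπC : ((π:ℝ):ℂ) ≠ 0 := Complex.ofReal_ne_zero.mpr hπ
  have hkC : (k:ℂ) ≠ 0 := by exact_mod_cast hk0
  set d : ℂ := -Complex.I * k with hd
  have hdne : d ≠ 0 := by
    simp [hd, Complex.I_ne_zero, hkC]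
  set a : ℕ → ℝ := fun ℓ => 2 * ℓ * π / C with ha
  set c : ℕ → ℂ := fun ℓ => Complex.exp (Complex.I * ((2*ℓ+1) * π / C)) with hcdef
  have hamono : ∀ ℓ : ℕ, a ℓ ≤ a (ℓ+1) := by
    intro ℓ
    simp only [ha]
    exact (div_le_div_iff_of_pos_right hCpos).mpr (by push_cast; nlinarith [Real.pi_pos, (Nat.cast_nonneg ℓ : (0:ℝ) ≤ ℓ)])
  have hQ' : ∀ ℓ : ℕ, ∀ φ : ℝ, a ℓ ≤ φ → φ < a (ℓ+1) → Q φ = c ℓ := by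
    intro ℓ φ h1 h2
    simp only [ha] at h1 h2
    have := hQ (ℓ:ℤ) φ (by push_cast at h1 ⊢; exact h1)
      (by push_cast at h2 ⊢; exact h2)
    rw [this, hcdef]
    push_cast
    ring_nf
  set f : ℝ → ℂ := fun φ => Q φ * Complex.exp (-Complex.I * k * φ) with hf
  set g : ℕ → ℝ → ℂ := fun ℓ φ => c ℓ * Complex.exp (-Complex.I * k * φ) with hg
  have hgcont : ∀ ℓ, Continuous (g ℓ) := by
    intro ℓ
    apply Continuous.mul continuous_const
    exact Complex.continuous_exp.comp (by continuity)
  have haeq : ∀ ℓ : ℕ, f =ᵐ[MeasureTheory.volume.restrict (Set.uIoc (a ℓ) (a (ℓ+1)))] g ℓ := by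
    intro ℓ
    rw [Set.uIoc_of_le (hamono ℓ)]
    have hne : ∀ᵐ φ : ℝ, φ ≠ a (ℓ+1) := by
      rw [MeasureTheory.ae_iff]
      have hset : {φ : ℝ | ¬ φ ≠ a (ℓ+1)} = {a (ℓ+1)} := by ext x; simp
      rw [hset]
      exact Real.volume_singleton
    filter_upwards [MeasureTheory.ae_restrict_mem measurableSet_Ioc,
      MeasureTheory.ae_restrict_of_ae hne] with φ hφ hφne
    have hlt : φ < a (ℓ+1) := lt_of_le_of_ne hφ.2 hφne
    simp only [hf, hg]
    rw [hQ' ℓ φ (le_of_lt hφ.1) hlt]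
  have hint : ∀ ℓ : ℕ, ℓ < C →
      IntervalIntegrable f MeasureTheory.volume (a ℓ) (a (ℓ+1)) := by
    intro ℓ _
    exact ((hgcont ℓ).intervalIntegrable _ _).congr_ae (haeq ℓ).symm
  have ha0 : a 0 = 0 := by simp [ha]
  have haC : a C = 2 * π := by
    rw [ha]
    field_simp
  have hsplit : (∫ φ in (0:ℝ)..(2*π), f φ) = ∑ ℓ ∈ Finset.range C, ∫ φ in a ℓ..a (ℓ+1), f φ := by
    rw [intervalIntegral.sum_integral_adjacent_intervals hint, ha0, haC]
  set z : ℂ := 2 * π * Complex.I * (1 - k) / C with hz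
  set K : ℂ := Complex.exp (Complex.I * π / C) *
      (Complex.exp (-(2*π*Complex.I*k/C)) - 1) / d with hK
  have hterm : ∀ ℓ : ℕ, (∫ φ in a ℓ..a (ℓ+1), f φ) = K * Complex.exp z ^ ℓ := by
    intro ℓ
    have h1 : (∫ φ in a ℓ..a (ℓ+1), f φ) = ∫ φ in a ℓ..a (ℓ+1), g ℓ φ :=
      intervalIntegral.integral_congr_ae
        ((MeasureTheory.ae_restrict_iff' measurableSet_uIoc).mp (haeq ℓ))
    have h2 : (∫ φ in a ℓ..a (ℓ+1), g ℓ φ)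
        = c ℓ * ((Complex.exp (d * (a (ℓ+1))) - Complex.exp (d * (a ℓ))) / d) := by
      simp only [hg, ← hd]
      rw [intervalIntegral.integral_const_mul, integral_exp_mul_complex hdne]
    have e1 : c ℓ * Complex.exp (d * ((a (ℓ+1) : ℝ) : ℂ))
        = Complex.exp (Complex.I * π / C) *
          (Complex.exp (-(2*π*Complex.I*k/C)) * Complex.exp ((ℓ:ℂ) * z)) := by
      simp only [hcdef, ha, hd, hz, ← Complex.exp_add]
      congr 1
      push_cast
      field_simp
      ring
    have e2 : c ℓ * Complex.exp (d * ((a ℓ : ℝ) : ℂ))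
        = Complex.exp (Complex.I * π / C) * Complex.exp ((ℓ:ℂ) * z) := by
      simp only [hcdef, ha, hd, hz, ← Complex.exp_add]
      congr 1
      push_cast
      field_simp
      ring
    rw [h1, h2, ← Complex.exp_nat_mul]
    calc c ℓ * ((Complex.exp (d * (a (ℓ+1))) - Complex.exp (d * (a ℓ))) / d)
        = (c ℓ * Complex.exp (d * (a (ℓ+1))) - c ℓ * Complex.exp (d * (a ℓ))) / d := by
          ring
      _ = K * Complex.exp ((ℓ:ℂ) * z) := by rw [e1, e2, hK]; ring
  have hζC : Complex.exp z ^ C = 1 := by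
    rw [← Complex.exp_nat_mul]
    have : (C:ℂ) * z = ((1 - k : ℤ) : ℂ) * (2 * π * Complex.I) := by
      rw [hz]; push_cast; field_simp
    rw [this, Complex.exp_int_mul_two_pi_mul_I]
  have hζ1 : Complex.exp z ≠ 1 := by
    intro h
    rw [Complex.exp_eq_one_iff] at h
    obtain ⟨n, hn⟩ := h
    rw [hz] at hn
    have h2πI : (2 * (π:ℂ) * Complex.I) ≠ 0 := by
      simp [hπC, Complex.I_ne_zero]
    have h2 : (2 * (π:ℂ) * Complex.I) * (1 - (k:ℂ)) = (2 * (π:ℂ) * Complex.I) * ((n:ℂ) * C) := by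
      field_simp at hn
      linear_combination (2 * (π:ℂ) * Complex.I) * hn
    have h3 : (1 - (k:ℂ)) = (n:ℂ) * C := mul_left_cancel₀ h2πI h2
    have h4 : (1 - k : ℤ) = n * C := by exact_mod_cast h3
    exact hk ⟨n, by omega⟩
  have hsum : ∑ ℓ ∈ Finset.range C, ∫ φ in a ℓ..a (ℓ+1), f φ = 0 := by
    rw [Finset.sum_congr rfl (fun ℓ _ => hterm ℓ), ← Finset.mul_sum,
      geom_sum_eq hζ1, hζC]
    simp
  rw [hsplit, hsum, mul_zero]
end

section
/- Define g(β) = |C(β) + i·S(β)|/β for β > 0, where C(β) = ∫₀^β cos(πt²/2) dt and S(β) = ∫₀^β sin(πt²/2) dt. Then lim_{β→0⁺} g(β) = 1, and g(β) < 1 for all β > 0. -/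
set_option maxHeartbeats 1000000 in
open Real in
/-- For the Fresnel integrals `C(β) = ∫₀^β cos(πt²/2) dt` and
`S(β) = ∫₀^β sin(πt²/2) dt`, the function `g(β) = |C(β) + i S(β)|/β` tends to
`1` as `β → 0⁺` and satisfies `g(β) < 1` for every `β > 0`. -/
theorem stmt_17 (g : ℝ → ℝ)
    (hg : ∀ β : ℝ, g β = ‖((∫ t in (0 : ℝ)..β, Real.cos (π * t ^ 2 / 2) : ℝ) : ℂ) +
          Complex.I * ((∫ t in (0 : ℝ)..β, Real.sin (π * t ^ 2 / 2) : ℝ) : ℂ)‖ / β) :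
    Filter.Tendsto g (nhdsWithin 0 (Set.Ioi 0)) (nhds 1) ∧
    ∀ β : ℝ, 0 < β → g β < 1 := by
  have hcc : Continuous fun t : ℝ => Real.cos (π * t ^ 2 / 2) := by continuity
  have hcs : Continuous fun t : ℝ => Real.sin (π * t ^ 2 / 2) := by continuity
  set c : ℝ → ℝ := fun β => ∫ t in (0 : ℝ)..β, Real.cos (π * t ^ 2 / 2) with hcdef
  set s : ℝ → ℝ := fun β => ∫ t in (0 : ℝ)..β, Real.sin (π * t ^ 2 / 2) with hsdef
  have hgcs : ∀ β : ℝ, g β = ‖(c β : ℂ) + Complex.I * (s β : ℂ)‖ / β := hg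
  have habs : ∀ β : ℝ, ‖(c β : ℂ) + Complex.I * (s β : ℂ)‖
      = Real.sqrt (c β ^ 2 + s β ^ 2) := by
    intro β
    rw [Complex.norm_def, Complex.normSq_apply]
    simp [pow_two]
  -- derivatives at 0
  have hderc : HasDerivAt c 1 0 := by
    have := intervalIntegral.integral_hasDerivAt_right
      (hcc.intervalIntegrable 0 0) (hcc.stronglyMeasurableAtFilter _ _) hcc.continuousAt
    simpa using this
  have hders : HasDerivAt s 0 0 := by
    have := intervalIntegral.integral_hasDerivAt_right
      (hcs.intervalIntegrable 0 0) (hcs.stronglyMeasurableAtFilter _ _) hcs.continuousAt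
    simpa using this
  have hc0 : c 0 = 0 := by simp [hcdef]
  have hs0 : s 0 = 0 := by simp [hsdef]
  have hmono : nhdsWithin (0 : ℝ) (Set.Ioi 0) ≤ nhdsWithin 0 {(0 : ℝ)}ᶜ := by
    apply nhdsWithin_mono
    intro x hx
    exact ne_of_gt hx
  have hslopec : Filter.Tendsto (fun β => c β / β) (nhdsWithin 0 (Set.Ioi 0)) (nhds 1) := by
    have h := (hasDerivAt_iff_tendsto_slope.mp hderc).mono_left hmono
    refine h.congr' ?_
    filter_upwards [self_mem_nhdsWithin] with β hβ
    simp [slope, hc0, div_eq_inv_mul]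
  have hslopes : Filter.Tendsto (fun β => s β / β) (nhdsWithin 0 (Set.Ioi 0)) (nhds 0) := by
    have h := (hasDerivAt_iff_tendsto_slope.mp hders).mono_left hmono
    refine h.congr' ?_
    filter_upwards [self_mem_nhdsWithin] with β hβ
    simp [slope, hs0, div_eq_inv_mul]
  constructor
  · -- the limit
    have hz : Filter.Tendsto (fun β => ((c β / β : ℝ) : ℂ) + Complex.I * ((s β / β : ℝ) : ℂ))
        (nhdsWithin 0 (Set.Ioi 0)) (nhds ((1 : ℂ) + Complex.I * (0 : ℂ))) := by
      exact ((Complex.continuous_ofReal.tendsto 1).comp hslopec).add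
        (((Complex.continuous_ofReal.tendsto 0).comp hslopes).const_mul Complex.I)
    have habs' := (continuous_norm.tendsto _).comp hz
    have hval : ‖(1 : ℂ) + Complex.I * (0 : ℂ)‖ = 1 := by simp
    rw [hval] at habs'
    refine habs'.congr' ?_
    filter_upwards [self_mem_nhdsWithin] with β hβ
    have hβ0 : (β : ℝ) ≠ 0 := ne_of_gt hβ
    rw [hgcs β]
    rw [Function.comp_apply]
    have : (((c β / β : ℝ) : ℂ) + Complex.I * ((s β / β : ℝ) : ℂ))
        = ((c β : ℂ) + Complex.I * (s β : ℂ)) / (β : ℂ) := by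
      push_cast
      field_simp
    rw [this, norm_div, Complex.norm_real, Real.norm_eq_abs, abs_of_pos hβ]
  · -- strict inequality
    intro β hβ
    set r : ℝ := Real.sqrt (c β ^ 2 + s β ^ 2) with hrdef
    have hr0 : 0 ≤ r := Real.sqrt_nonneg _
    have hr2 : r ^ 2 = c β ^ 2 + s β ^ 2 := Real.sq_sqrt (by positivity)
    have hrβ : r < β := by
      rcases eq_or_lt_of_le hr0 with h0 | hrpos
      · exact h0 ▸ hβ
      -- pointwise bound
      have hle : ∀ x : ℝ, c β * Real.cos (π * x ^ 2 / 2) + s β * Real.sin (π * x ^ 2 / 2) ≤ r := by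
        intro x
        have h1 := Real.sin_sq_add_cos_sq (π * x ^ 2 / 2)
        nlinarith [sq_nonneg (c β * Real.sin (π * x ^ 2 / 2) - s β * Real.cos (π * x ^ 2 / 2)),
          sq_nonneg (c β * Real.cos (π * x ^ 2 / 2) + s β * Real.sin (π * x ^ 2 / 2) - r)]
      -- strict at some point
      have hlt : ∃ x ∈ Set.Icc 0 β,
          c β * Real.cos (π * x ^ 2 / 2) + s β * Real.sin (π * x ^ 2 / 2) < r := by
        by_cases h0 : c β * Real.cos (π * (0:ℝ) ^ 2 / 2) + s β * Real.sin (π * (0:ℝ) ^ 2 / 2) < r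
        · exact ⟨0, ⟨le_refl 0, hβ.le⟩, h0⟩
        · have hceq : c β = r := by
            have := hle 0
            simp only [ne_eq, OfNat.ofNat_ne_zero, not_false_eq_true, zero_pow, mul_zero,
              zero_div, Real.cos_zero, mul_one, Real.sin_zero] at this h0
            linarith [not_lt.mp h0]
          have hseq : s β = 0 := by
            have h2 : s β ^ 2 = 0 := by rw [hceq] at hr2; linarith
            exact sq_eq_zero_iff.mp h2
          set x₀ : ℝ := min β 1 with hx₀
          have hx₀pos : 0 < x₀ := lt_min hβ one_pos
          have hx₀le : x₀ ≤ 1 := min_le_right _ _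
          have hφpos : 0 < π * x₀ ^ 2 / 2 := by positivity
          have hsq1 : x₀ ^ 2 ≤ 1 := pow_le_one₀ hx₀pos.le hx₀le
          have hφle : π * x₀ ^ 2 / 2 ≤ π := by
            have h := mul_le_of_le_one_right Real.pi_pos.le hsq1
            linarith
          have hcoslt : Real.cos (π * x₀ ^ 2 / 2) < 1 := by
            have := Real.strictAntiOn_cos (Set.mem_Icc.mpr ⟨le_refl 0, Real.pi_pos.le⟩)
              (Set.mem_Icc.mpr ⟨hφpos.le, hφle⟩) hφpos
            simpa using this
          refine ⟨x₀, ⟨hx₀pos.le, min_le_left _ _⟩, ?_⟩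
          rw [hceq, hseq]
          simpa using mul_lt_mul_of_pos_left hcoslt hrpos
      have hint : (∫ x in (0:ℝ)..β, (c β * Real.cos (π * x ^ 2 / 2)
          + s β * Real.sin (π * x ^ 2 / 2))) < ∫ _x in (0:ℝ)..β, r := by
        apply intervalIntegral.integral_lt_integral_of_continuousOn_of_le_of_exists_lt hβ
        · exact ((continuous_const.mul hcc).add (continuous_const.mul hcs)).continuousOn
        · exact continuousOn_const
        · exact fun x _ => hle x
        · exact hlt
      have hsplit : (∫ x in (0:ℝ)..β, (c β * Real.cos (π * x ^ 2 / 2)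
          + s β * Real.sin (π * x ^ 2 / 2))) = c β * c β + s β * s β := by
        rw [intervalIntegral.integral_add (f := fun x => c β * Real.cos (π * x ^ 2 / 2))
          (g := fun x => s β * Real.sin (π * x ^ 2 / 2)) ((continuous_const.mul hcc).intervalIntegrable 0 β)
          ((continuous_const.mul hcs).intervalIntegrable 0 β),
          intervalIntegral.integral_const_mul, intervalIntegral.integral_const_mul]
      have hconst : (∫ _x in (0:ℝ)..β, r) = β * r := by
        rw [intervalIntegral.integral_const]; simp [smul_eq_mul]
      rw [hsplit, hconst] at hint
      have hrr : r * r = c β * c β + s β * s β := by rw [← sq]; rw [hr2]; ring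
      have : r * r < β * r := by linarith
      exact lt_of_mul_lt_mul_right this hr0
    rw [hgcs β, habs β, ← hrdef]
    rw [div_lt_one hβ]
    exact hrβ
end
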